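/- Let θ : D* → D*⊗D* be the k-linear map determined by θ(1) = 1⊗1, θ(Y_s) = Y_s⊗Y_s and θ(ω_s) = ω_s⊗Y_s + Y_s⊗ω_s for all s ∈ ℤ. Then θ is a morphism of differential graded k-algebras — i.e. θ(ab) = θ(a)θ(b) for all a, b ∈ D*, θ(1) is the unit, and θ∘d = d∘θ — and moreover (ε₋⊗id)∘θ = id and (id⊗ε₋)∘θ = id. -/

import Mathlib

/-- Basis labels for the differential graded algebra `D*` over `k`:
`one` is the constant function `1` (degree 0), `Y s` is the Heaviside function
with singular support `{s}` (degree 0), and `om s` is the Dirac function with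
singular support `{s}` (degree 1). -/
inductive DB : Type
  | one : DB
  | Y : ℤ → DB
  | om : ℤ → DB
  deriving DecidableEq

/-- cohomological degree of a basis element -/
def DB.deg : DB → ℕ
  | .one => 0
  | .Y _ => 0
  | .om _ => 1

/-- singular support of a basis element -/
def DB.supp : DB → Finset ℤ
  | .one => ∅
  | .Y s => {s}
  | .om s => {s}

variable (k : Type) [CommRing k]

/-- The `n`-fold tensor power `D*^{⊗n}` of the complex `D*` over `k`, modelled as the
free `k`-module on the basis of decomposable tensors `f₁ ⊗ ⋯ ⊗ f_n` of basis elements. -/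
abbrev Tot (n : ℕ) : Type := (Fin n → DB) →₀ k

/-- total (cohomological) degree of a basis tensor -/
def degT {n : ℕ} (g : Fin n → DB) : ℕ := ∑ i, (g i).deg

/-- the homogeneous degree-`i` component of `D*^{⊗n}` -/
def homog (n i : ℕ) : Submodule k (Tot k n) where
  carrier := {x | ∀ g, x g ≠ 0 → degT g = i}
  add_mem' := by
    intro x y hx hy g hg
    by_cases h : x g = 0
    · refine hy g ?_
      intro h'; apply hg; simp [Finsupp.add_apply, h, h']
    · exact hx g h
  zero_mem' := by intro g hg; simp at hg
  smul_mem' := by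
    intro c x hx g hg
    refine hx g fun h => hg ?_
    simp [Finsupp.smul_apply, h]

lemma mem_homog {n i : ℕ} {x : Tot k n} :
    x ∈ homog k n i ↔ ∀ g, x g ≠ 0 → degT g = i := Iff.rfl

/-- `I` : the span of the basis tensors `f₀ ⊗ ⋯ ⊗ f_r` in which every factor is a
Heaviside or a Dirac function (no factor equals `1`). -/
def noOne (n : ℕ) : Submodule k (Tot k n) where
  carrier := {x | ∀ g, x g ≠ 0 → ∀ i, g i ≠ DB.one}
  add_mem' := by
    intro x y hx hy g hg
    by_cases h : x g = 0
    · refine hy g ?_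
      intro h'; apply hg; simp [Finsupp.add_apply, h, h']
    · exact hx g h
  zero_mem' := by intro g hg; simp at hg
  smul_mem' := by
    intro c x hx g hg
    refine hx g fun h => hg ?_
    simp [Finsupp.smul_apply, h]

lemma mem_noOne {n : ℕ} {x : Tot k n} :
    x ∈ noOne k n ↔ ∀ g, x g ≠ 0 → ∀ i, g i ≠ DB.one := Iff.rfl

/-- The Koszul-sign differential on a basis tensor:
`d(f₁ ⊗ ⋯ ⊗ f_n) = Σ_i (-1)^{deg f₁ + ⋯ + deg f_{i-1}} f₁ ⊗ ⋯ ⊗ d f_i ⊗ ⋯ ⊗ f_n`,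
where `d(Y s) = - ω_s`, `d 1 = 0`, `d (ω s) = 0`. -/
noncomputable def dB {n : ℕ} (g : Fin n → DB) : Tot k n :=
  ∑ i : Fin n,
    match g i with
    | DB.Y s =>
        Finsupp.single (Function.update g i (DB.om s))
          (-(-1 : k) ^ (∑ j ∈ Finset.univ.filter (fun j : Fin n => j < i), (g j).deg))
    | _ => (0 : Tot k n)

/-- the total differential of the complex `D*^{⊗n}` (it raises degree by one) -/
noncomputable def dT (n : ℕ) : Tot k n →ₗ[k] Tot k n :=
  Finsupp.linearCombination k (dB k (n := n))


/-- multiplication of `D*` on basis elements -/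
noncomputable def mulB : DB → DB → Tot k 1
  | DB.one, b => Finsupp.single (fun _ => b) 1
  | a, DB.one => Finsupp.single (fun _ => a) 1
  | DB.Y s, DB.Y t => Finsupp.single (fun _ => DB.Y (min s t)) 1
  | DB.Y s, DB.om t => if t ≤ s then Finsupp.single (fun _ => DB.om t) 1 else 0
  | DB.om t, DB.Y s => if t + 1 ≤ s then Finsupp.single (fun _ => DB.om t) 1 else 0
  | DB.om _, DB.om _ => 0

/-- the (bilinear) multiplication of `D*` -/
noncomputable def mul1 : Tot k 1 →ₗ[k] Tot k 1 →ₗ[k] Tot k 1 :=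
  Finsupp.linearCombination k fun a =>
    Finsupp.linearCombination k fun b => mulB k (a 0) (b 0)

/-- the bilinear gluing map `D* × D* → D* ⊗ D*` -/
noncomputable def combine : Tot k 1 →ₗ[k] Tot k 1 →ₗ[k] Tot k 2 :=
  Finsupp.linearCombination k fun a =>
    Finsupp.linearCombination k fun b => Finsupp.single ![a 0, b 0] (1 : k)

/-- the multiplication of the graded tensor-product algebra `D* ⊗ D*`:
`(a ⊗ b)(c ⊗ d) = (-1)^{(deg b)(deg c)} (ac) ⊗ (bd)` -/
noncomputable def mul2 : Tot k 2 →ₗ[k] Tot k 2 →ₗ[k] Tot k 2 :=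
  Finsupp.linearCombination k fun g =>
    Finsupp.linearCombination k fun h =>
      ((-1 : k) ^ ((g 1).deg * (h 0).deg)) •
        combine k (mulB k (g 0) (h 0)) (mulB k (g 1) (h 1))

/-- the map `θ : D* → D* ⊗ D*` determined by `θ(1) = 1⊗1`, `θ(Y_s) = Y_s ⊗ Y_s`,
`θ(ω_s) = ω_s ⊗ Y_s + Y_s ⊗ ω_s`. -/
noncomputable def theta : Tot k 1 →ₗ[k] Tot k 2 :=
  Finsupp.linearCombination k fun g =>
    match g 0 with
    | DB.one => Finsupp.single ![DB.one, DB.one] 1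
    | DB.Y s => Finsupp.single ![DB.Y s, DB.Y s] 1
    | DB.om s => Finsupp.single ![DB.om s, DB.Y s] 1 + Finsupp.single ![DB.Y s, DB.om s] 1

/-- the augmentation `ε₋` on basis elements: `ε₋ 1 = 1`, `ε₋ Y_s = 1`, `ε₋ ω_s = 0` -/
def epsB : DB → k
  | DB.one => 1
  | DB.Y _ => 1
  | DB.om _ => 0

/-- `ε₋ ⊗ id : D* ⊗ D* → D*` -/
noncomputable def epsL : Tot k 2 →ₗ[k] Tot k 1 :=
  Finsupp.linearCombination k fun g =>
    epsB k (g 0) • Finsupp.single (fun _ : Fin 1 => g 1) (1 : k)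

/-- `id ⊗ ε₋ : D* ⊗ D* → D*` -/
noncomputable def epsR : Tot k 2 →ₗ[k] Tot k 1 :=
  Finsupp.linearCombination k fun g =>
    epsB k (g 1) • Finsupp.single (fun _ : Fin 1 => g 0) (1 : k)

set_option maxHeartbeats 1000000

lemma fin1_eta (a : Fin 1 → DB) : (fun _ : Fin 1 => a 0) = a :=
  funext fun i => by rw [Subsingleton.elim i 0]

lemma theta_single (a : Fin 1 → DB) (c : k) : theta k (Finsupp.single a c) =
    c • (match a 0 with
    | DB.one => Finsupp.single ![DB.one, DB.one] 1
    | DB.Y s => Finsupp.single ![DB.Y s, DB.Y s] 1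
    | DB.om s => Finsupp.single ![DB.om s, DB.Y s] 1 + Finsupp.single ![DB.Y s, DB.om s] (1:k)) := by
  simp [theta, Finsupp.linearCombination_single]

example (s : ℤ) : theta k (Finsupp.single (fun _ : Fin 1 => DB.om s) (1 : k))
        = Finsupp.single ![DB.om s, DB.Y s] 1 + Finsupp.single ![DB.Y s, DB.om s] 1 := by
  simp [theta_single]

lemma mul1_single (a b : Fin 1 → DB) (c d : k) :
    mul1 k (Finsupp.single a c) (Finsupp.single b d) = (c*d) • mulB k (a 0) (b 0) := by
  simp [mul1, Finsupp.linearCombination_single, mul_smul]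

lemma mul2_single (g h : Fin 2 → DB) (c d : k) :
    mul2 k (Finsupp.single g c) (Finsupp.single h d) =
    (c*d) • (((-1 : k) ^ ((g 1).deg * (h 0).deg)) •
        combine k (mulB k (g 0) (h 0)) (mulB k (g 1) (h 1))) := by
  simp [mul2, Finsupp.linearCombination_single, mul_smul]

lemma combine_single (a b : Fin 1 → DB) (c d : k) :
    combine k (Finsupp.single a c) (Finsupp.single b d) =
    (c*d) • Finsupp.single ![a 0, b 0] (1:k) := by
  simp [combine, Finsupp.linearCombination_single, mul_smul]
lemma key (a b : DB) :
    theta k (mulB k a b) =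
    mul2 k (theta k (Finsupp.single (fun _ : Fin 1 => a) 1))
           (theta k (Finsupp.single (fun _ : Fin 1 => b) 1)) := by
  cases a with
  | one => cases b <;> simp [mulB, theta_single, mul2_single, combine_single, DB.deg]
  | Y s => cases b with
    | one => simp [mulB, theta_single, mul2_single, combine_single, DB.deg]
    | Y t => simp [mulB, theta_single, mul2_single, combine_single, DB.deg]
    | om t =>
      by_cases h : t ≤ s
      · simp [mulB, h, theta_single, mul2_single, combine_single, DB.deg, min_eq_right h]
      · simp [mulB, h, theta_single, mul2_single, combine_single, DB.deg]
  | om s => cases b with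
    | one => simp [mulB, theta_single, mul2_single, combine_single, DB.deg]
    | Y t =>
      by_cases h : s + 1 ≤ t
      · simp [mulB, h, theta_single, mul2_single, combine_single, DB.deg,
          min_eq_left (by omega : s ≤ t)]
      · simp [mulB, h, theta_single, mul2_single, combine_single, DB.deg]
    | om t =>
      simp only [mulB, theta_single, mul2_single, combine_single, DB.deg]
      by_cases h : s + 1 ≤ t
      · simp [mulB, theta_single, mul2_single, combine_single, DB.deg, h,
          if_neg (show ¬ t ≤ s by omega)]
      · simp [mulB, theta_single, mul2_single, combine_single, DB.deg, h]
lemma key' (a b : Fin 1 → DB) :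
    theta k (mulB k (a 0) (b 0)) =
    mul2 k (theta k (Finsupp.single a 1)) (theta k (Finsupp.single b 1)) := by
  have := key k (a 0) (b 0)
  rwa [fin1_eta a, fin1_eta b] at this

lemma theta_smul_single (a : Fin 1 → DB) (c : k) :
    theta k (Finsupp.single a c) = c • theta k (Finsupp.single a 1) := by
  rw [← map_smul]; congr 1; simp

lemma mult (x y : Tot k 1) : theta k (mul1 k x y) = mul2 k (theta k x) (theta k y) := by
  induction x using Finsupp.induction_linear with
  | zero => simp
  | add f g hf hg => simp [hf, hg]
  | single a c =>
    induction y using Finsupp.induction_linear with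
    | zero => simp
    | add f g hf hg => simp [hf, hg]
    | single b d =>
      rw [mul1_single, map_smul, key' k a b, theta_smul_single k a c,
        theta_smul_single k b d]
      simp [smul_smul, mul_comm]
lemma filt0 : (Finset.univ.filter (fun j : Fin 2 => j < 0)) = ∅ := by decide
lemma filt1 : (Finset.univ.filter (fun j : Fin 2 => j < 1)) = {0} := by decide
lemma filt1' : (Finset.univ.filter (fun j : Fin 2 => j = 0)) = {0} := by decide
lemma filt0' : (Finset.univ.filter (fun j : Fin 1 => j < 0)) = ∅ := by decide

lemma upd0 (a b x : DB) : Function.update ![a, b] (0 : Fin 2) x = ![x, b] := by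
  funext i; fin_cases i <;> simp
lemma upd1 (a b x : DB) : Function.update ![a, b] (1 : Fin 2) x = ![a, x] := by
  funext i; fin_cases i <;> simp
lemma upd00 (a x : DB) : Function.update (fun _ : Fin 1 => a) (0 : Fin 1) x = fun _ => x := by
  funext i; rw [Subsingleton.elim i 0]; simp

lemma dB_one1 : dB k (fun _ : Fin 1 => DB.one) = 0 := by
  simp [dB]
lemma dB_om1 (s : ℤ) : dB k (fun _ : Fin 1 => DB.om s) = 0 := by
  simp [dB]
lemma dB_Y1 (s : ℤ) : dB k (fun _ : Fin 1 => DB.Y s) = - Finsupp.single (fun _ => DB.om s) 1 := by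
  simp [dB, Fin.sum_univ_one, filt0', upd00]

lemma dB_oneone : dB k ![DB.one, DB.one] = 0 := by
  simp [dB, Fin.sum_univ_two]
lemma dB_YY (s t : ℤ) : dB k ![DB.Y s, DB.Y t] =
    - Finsupp.single ![DB.om s, DB.Y t] 1 - Finsupp.single ![DB.Y s, DB.om t] 1 := by
  simp [dB, Fin.sum_univ_two, filt0, filt1, filt1', upd0, upd1, DB.deg]
  abel
lemma dB_omY (s t : ℤ) : dB k ![DB.om s, DB.Y t] = Finsupp.single ![DB.om s, DB.om t] 1 := by
  simp [dB, Fin.sum_univ_two, filt0, filt1, filt1', upd0, upd1, DB.deg]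
lemma dB_Yom (s t : ℤ) : dB k ![DB.Y s, DB.om t] = - Finsupp.single ![DB.om s, DB.om t] 1 := by
  simp [dB, Fin.sum_univ_two, filt0, filt1, filt1', upd0, upd1, DB.deg]

lemma chain : (dT k 2).comp (theta k) = (theta k).comp (dT k 1) := by
  apply Finsupp.lhom_ext
  intro a c
  obtain ⟨x, rfl⟩ : ∃ x, a = fun _ => x := ⟨a 0, (fin1_eta a).symm⟩
  cases x with
  | one =>
    simp [LinearMap.comp_apply, dT, Finsupp.linearCombination_single, theta_single,
      dB_one1, dB_oneone]
  | Y s =>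
    simp [LinearMap.comp_apply, dT, Finsupp.linearCombination_single, theta_single,
      dB_Y1, dB_YY, theta_smul_single]
    rw [show (Finsupp.single ![DB.Y s, DB.om s] c : Tot k 2)
          = c • Finsupp.single ![DB.Y s, DB.om s] (1:k) by simp,
        show (Finsupp.single ![DB.om s, DB.Y s] c : Tot k 2)
          = c • Finsupp.single ![DB.om s, DB.Y s] (1:k) by simp]
    module
  | om s =>
    simp [LinearMap.comp_apply, dT, Finsupp.linearCombination_single, theta_single,
      dB_om1, dB_omY, dB_Yom]
lemma epsLth : (epsL k).comp (theta k) = LinearMap.id := by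
  apply Finsupp.lhom_ext
  intro a c
  obtain ⟨x, rfl⟩ : ∃ x, a = fun _ => x := ⟨a 0, (fin1_eta a).symm⟩
  cases x <;>
    simp [LinearMap.comp_apply, theta_single, epsL, Finsupp.linearCombination_single, epsB]

lemma epsRth : (epsR k).comp (theta k) = LinearMap.id := by
  apply Finsupp.lhom_ext
  intro a c
  obtain ⟨x, rfl⟩ : ∃ x, a = fun _ => x := ⟨a 0, (fin1_eta a).symm⟩
  cases x <;>
    simp [LinearMap.comp_apply, theta_single, epsR, Finsupp.linearCombination_single, epsB]
/-- The map `θ : D* → D* ⊗ D*` determined by `θ(1) = 1⊗1`,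
`θ(Y_s) = Y_s ⊗ Y_s`, `θ(ω_s) = ω_s ⊗ Y_s + Y_s ⊗ ω_s` is a morphism of differential
graded `k`-algebras, and `(ε₋ ⊗ id) ∘ θ = id` and `(id ⊗ ε₋) ∘ θ = id`. -/
theorem statement16 (k : Type) [CommRing k] :
    -- determination of θ
    theta k (Finsupp.single (fun _ : Fin 1 => DB.one) (1 : k))
        = Finsupp.single ![DB.one, DB.one] 1 ∧
    (∀ s : ℤ, theta k (Finsupp.single (fun _ : Fin 1 => DB.Y s) (1 : k))
        = Finsupp.single ![DB.Y s, DB.Y s] 1) ∧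
    (∀ s : ℤ, theta k (Finsupp.single (fun _ : Fin 1 => DB.om s) (1 : k))
        = Finsupp.single ![DB.om s, DB.Y s] 1 + Finsupp.single ![DB.Y s, DB.om s] 1) ∧
    -- θ is multiplicative and unital
    (∀ x y : Tot k 1, theta k (mul1 k x y) = mul2 k (theta k x) (theta k y)) ∧
    -- θ is a chain map
    (dT k 2).comp (theta k) = (theta k).comp (dT k 1) ∧
    -- the two counit identities
    (epsL k).comp (theta k) = LinearMap.id ∧
    (epsR k).comp (theta k) = LinearMap.id := by
  exact ⟨by simp [theta_single], fun s => by simp [theta_single],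
    fun s => by simp [theta_single], mult k, chain k, epsLth k, epsRth k⟩
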